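/- The vector discrete Gaussian mechanism satisfies zCDP at the level of output distributions: Let n ≥ 1, ρ > 0, Δ ≥ 0, and let a, a' ∈ ℤⁿ satisfy ‖a − a'‖₂ ≤ Δ (Euclidean norm). Let P be the distribution on ℤⁿ of a + Y and P' the distribution of a' + Y, where Y has n independent coordinates each distributed as N_ℤ(1/(2ρ)). Then for every α ∈ (1, ∞), D_α(P ‖ P') ≤ Δ²·ρ·α. -/

import Mathlib

open scoped ENNReal

/-- Rényi divergence of order `α` between two (sub)probability mass functions. -/
noncomputable def renyiDiv {X : Type*} (α : ℝ) (P Q : X → ℝ≥0∞) : EReal :=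
  (((α - 1)⁻¹ : ℝ) : EReal) * ENNReal.log (∑' x, P x ^ α * Q x ^ (1 - α))

/-- The discrete Gaussian mass function `N_ℤ(v)` with variance parameter `v = σ²`. -/
noncomputable def discreteGaussian (v : ℝ) (x : ℤ) : ℝ≥0∞ :=
  ENNReal.ofReal
    (Real.exp (-(x : ℝ) ^ 2 / (2 * v)) / ∑' y : ℤ, Real.exp (-(y : ℝ) ^ 2 / (2 * v)))

section Helpers

open Real Complex


/-- Summability of shifted Gaussian series over `ℤ`. -/
lemma summable_cexp_gauss {a : ℝ} (ha : 0 < a) (b : ℂ) :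
    Summable fun n : ℤ => Complex.exp (-(π : ℂ) * a * n ^ 2 + 2 * π * b * n) := by
  have h := (summable_jacobiTheta₂_term_iff (-Complex.I * b) ((a : ℂ) * Complex.I)).mpr
    (by simpa using ha)
  refine h.congr fun n => ?_
  unfold jacobiTheta₂_term
  congr 1
  ring_nf
  rw [Complex.I_sq]
  ring

lemma summable_exp_gauss {a : ℝ} (ha : 0 < a) (b : ℝ) :
    Summable fun n : ℤ => Real.exp (-π * a * n ^ 2 + 2 * π * b * n) := by
  have := summable_cexp_gauss ha (b : ℂ)
  rw [← Complex.summable_ofReal]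
  refine this.congr fun n => ?_
  push_cast [Complex.ofReal_exp]
  ring_nf

lemma norm_cexp_quad {a : ℝ} (ha : 0 < a) (b : ℝ) (n : ℤ) :
    ‖Complex.exp (-(π:ℂ) / a * ((n:ℂ) + Complex.I * b) ^ 2)‖
      = Real.exp (-π / a * n ^ 2 + π / a * b ^ 2) := by
  have h2 : ((n:ℂ) + Complex.I * (b:ℂ)) ^ 2
      = ((((n:ℝ)^2 - b^2 : ℝ)) : ℂ) + ((2*(n:ℝ)*b : ℝ) : ℂ) * Complex.I := by
    push_cast
    ring_nf
    rw [Complex.I_sq]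
    ring
  have h3 : -(π:ℂ) / a = (((-π / a : ℝ)) : ℂ) := by push_cast; ring
  rw [Complex.norm_exp, h3, h2, Complex.re_ofReal_mul]
  simp only [Complex.add_re, Complex.ofReal_re, Complex.mul_re, Complex.I_re, Complex.I_im,
    Complex.ofReal_im]
  push_cast
  ring_nf

lemma key_shift {a : ℝ} (ha : 0 < a) (c : ℝ) :
    ∑' n : ℤ, Real.exp (-π * a * ((n:ℝ) - c) ^ 2) ≤ ∑' n : ℤ, Real.exp (-π * a * (n:ℝ) ^ 2) := by
  set b : ℝ := a * c with hb
  have hS1 : Summable fun n : ℤ => Real.exp (-π * a * ((n:ℝ) - c) ^ 2) := by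
    have := (summable_exp_gauss ha b).mul_right (Real.exp (-π * a * c ^ 2))
    refine this.congr fun n => ?_
    rw [← Real.exp_add]; congr 1; rw [hb]; ring
  have hSd : Summable fun n : ℤ =>
      ‖Complex.exp (-(π:ℂ) / a * ((n:ℂ) + Complex.I * b) ^ 2)‖ := by
    have := (summable_exp_gauss (inv_pos.mpr ha) 0).mul_right (Real.exp (π / a * b ^ 2))
    refine this.congr fun n => ?_
    rw [norm_cexp_quad ha, ← Real.exp_add]
    congr 1
    field_simp
    ring
  have hofReal : ((∑' n : ℤ, Real.exp (-π * a * ((n:ℝ) - c) ^ 2) : ℝ) : ℂ)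
      = ∑' n : ℤ, Complex.exp (-(π:ℂ) * a * ((n:ℂ) - c) ^ 2) := by
    rw [Complex.ofReal_tsum]
    refine tsum_congr fun n => ?_
    rw [Complex.ofReal_exp]
    congr 1
    push_cast
    ring
  have hC : (∑' n : ℤ, Complex.exp (-(π:ℂ) * a * ((n:ℂ) - c) ^ 2))
      = Complex.exp (-(π:ℂ) * a * c ^ 2) *
        (1 / (a:ℂ) ^ (1/2 : ℂ) * ∑' n : ℤ, Complex.exp (-(π:ℂ) / a * ((n:ℂ) + Complex.I * b) ^ 2)) := by
    rw [← Complex.tsum_exp_neg_quadratic (show 0 < ((a:ℂ)).re by simpa using ha) (b:ℂ),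
      ← tsum_mul_left]
    refine tsum_congr fun n => ?_
    rw [← Complex.exp_add]
    congr 1
    push_cast [hb]
    ring
  have hnorm_cpow : ‖1 / (a:ℂ) ^ (1/2 : ℂ)‖ = 1 / a ^ (1/2 : ℝ) := by
    have : ((a:ℂ)) ^ (1/2 : ℂ) = ((a ^ (1/2:ℝ) : ℝ) : ℂ) := by
      rw [Complex.ofReal_cpow ha.le]; norm_num
    rw [this, norm_div, norm_one, Complex.norm_real, Real.norm_eq_abs,
      _root_.abs_of_nonneg (Real.rpow_nonneg ha.le _)]
  have hnexp : ‖Complex.exp (-(π:ℂ) * a * c ^ 2)‖ = Real.exp (-π * a * c ^ 2) := by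
    rw [Complex.norm_exp]
    congr 1
    have : -(π:ℂ) * a * c ^ 2 = (((-π * a * c ^ 2 : ℝ)) : ℂ) := by push_cast; ring
    rw [this, Complex.ofReal_re]
  calc ∑' n : ℤ, Real.exp (-π * a * ((n:ℝ) - c) ^ 2)
      = ‖((∑' n : ℤ, Real.exp (-π * a * ((n:ℝ) - c) ^ 2) : ℝ) : ℂ)‖ := by
        rw [Complex.norm_real, Real.norm_eq_abs]
        exact (_root_.abs_of_nonneg (tsum_nonneg fun n => (Real.exp_pos _).le)).symm
    _ = Real.exp (-π * a * c ^ 2) * (1 / a ^ (1/2:ℝ) *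
          ‖∑' n : ℤ, Complex.exp (-(π:ℂ) / a * ((n:ℂ) + Complex.I * b) ^ 2)‖) := by
        rw [hofReal, hC, norm_mul, norm_mul, hnorm_cpow, hnexp]
    _ ≤ Real.exp (-π * a * c ^ 2) * (1 / a ^ (1/2:ℝ) *
          ∑' n : ℤ, ‖Complex.exp (-(π:ℂ) / a * ((n:ℂ) + Complex.I * b) ^ 2)‖) := by
        exact mul_le_mul_of_nonneg_left
          (mul_le_mul_of_nonneg_left (norm_tsum_le_tsum_norm hSd) (by positivity))
          (Real.exp_pos _).le
    _ = Real.exp (-π * a * c ^ 2) * (1 / a ^ (1/2:ℝ) *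
          (Real.exp (π / a * b ^ 2) * ∑' n : ℤ, Real.exp (-π / a * (n:ℝ) ^ 2))) := by
        congr 1
        congr 1
        rw [← tsum_mul_left]
        refine tsum_congr fun n => ?_
        rw [norm_cexp_quad ha, ← Real.exp_add]
        congr 1
        ring
    _ = ∑' n : ℤ, Real.exp (-π * a * (n:ℝ) ^ 2) := by
        have hone : Real.exp (-π * a * c ^ 2) * Real.exp (π / a * b ^ 2) = 1 := by
          rw [← Real.exp_add, show -π * a * c ^ 2 + π / a * b ^ 2 = 0 by
            rw [hb]; field_simp; ring, Real.exp_zero]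
        calc Real.exp (-π * a * c ^ 2) * (1 / a ^ (1/2:ℝ) *
              (Real.exp (π / a * b ^ 2) * ∑' n : ℤ, Real.exp (-π / a * (n:ℝ) ^ 2)))
            = (Real.exp (-π * a * c ^ 2) * Real.exp (π / a * b ^ 2)) *
              (1 / a ^ (1/2:ℝ) * ∑' n : ℤ, Real.exp (-π / a * (n:ℝ) ^ 2)) := by ring
          _ = ∑' n : ℤ, Real.exp (-π * a * (n:ℝ) ^ 2) := by
              rw [hone, one_mul, ← Real.tsum_exp_neg_mul_int_sq ha]

lemma key_shift' {t : ℝ} (ht : 0 < t) (c : ℝ) :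
    ∑' n : ℤ, Real.exp (-((n:ℝ) - c) ^ 2 / (2*t)) ≤ ∑' n : ℤ, Real.exp (-(n:ℝ) ^ 2 / (2*t)) := by
  have ha : 0 < (2*π*t)⁻¹ := by positivity
  have harg : ∀ x : ℝ, -x ^ 2 / (2*t) = -π * (2*π*t)⁻¹ * x ^ 2 := by
    intro x
    have hπ := Real.pi_pos
    field_simp
  calc ∑' n : ℤ, Real.exp (-((n:ℝ) - c) ^ 2 / (2*t))
      = ∑' n : ℤ, Real.exp (-π * (2*π*t)⁻¹ * ((n:ℝ) - c) ^ 2) := by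
        exact tsum_congr fun n => by rw [harg]
    _ ≤ ∑' n : ℤ, Real.exp (-π * (2*π*t)⁻¹ * (n:ℝ) ^ 2) := key_shift ha c
    _ = ∑' n : ℤ, Real.exp (-(n:ℝ) ^ 2 / (2*t)) := by
        exact tsum_congr fun n => by rw [harg]

lemma harg {t : ℝ} (ht : 0 < t) (x : ℝ) : -x ^ 2 / (2*t) = -π * (2*π*t)⁻¹ * x ^ 2 := by
  have hπ := Real.pi_pos
  field_simp

lemma summable_shift {t : ℝ} (ht : 0 < t) (c : ℝ) :
    Summable fun n : ℤ => Real.exp (-((n:ℝ) - c) ^ 2 / (2*t)) := by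
  have ha : 0 < (2*π*t)⁻¹ := by have := Real.pi_pos; positivity
  have := (summable_exp_gauss ha ((2*π*t)⁻¹ * c)).mul_right
    (Real.exp (-π * (2*π*t)⁻¹ * c ^ 2))
  refine this.congr fun n => ?_
  rw [← Real.exp_add, harg ht]
  congr 1
  ring

lemma tsum_gauss_pos {t : ℝ} (ht : 0 < t) :
    0 < ∑' n : ℤ, Real.exp (-(n:ℝ) ^ 2 / (2*t)) := by
  have h := summable_shift ht 0
  simp only [sub_zero] at h
  exact Summable.tsum_pos h (fun n => (Real.exp_pos _).le) 0 (Real.exp_pos _)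

lemma coord {t : ℝ} (ht : 0 < t) {α : ℝ} (hα : 1 < α) (a a' : ℤ) :
    ∑' x : ℤ, (discreteGaussian t (x - a)) ^ α * (discreteGaussian t (x - a')) ^ (1 - α)
      ≤ ENNReal.ofReal (Real.exp (α * (α-1) * ((a:ℝ)-(a':ℝ))^2 / (2*t))) := by
  set S : ℝ := ∑' y : ℤ, Real.exp (-(y:ℝ) ^ 2 / (2*t)) with hSdef
  have hS : 0 < S := tsum_gauss_pos ht
  set c : ℝ := α * a + (1-α) * a' with hc
  set K : ℝ := Real.exp (α * (α-1) * ((a:ℝ)-(a':ℝ))^2 / (2*t)) with hK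
  have hterm : ∀ x : ℤ,
      (discreteGaussian t (x - a)) ^ α * (discreteGaussian t (x - a')) ^ (1 - α)
        = ENNReal.ofReal (K / S * Real.exp (-((x:ℝ) - c) ^ 2 / (2*t))) := by
    intro x
    rw [discreteGaussian, discreteGaussian, ← hSdef]
    have h1 : (0:ℝ) < Real.exp (-((x - a : ℤ):ℝ) ^ 2 / (2*t)) / S :=
      div_pos (Real.exp_pos _) hS
    have h2 : (0:ℝ) < Real.exp (-((x - a' : ℤ):ℝ) ^ 2 / (2*t)) / S :=
      div_pos (Real.exp_pos _) hS
    rw [ENNReal.ofReal_rpow_of_pos h1, ENNReal.ofReal_rpow_of_pos h2,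
      ← ENNReal.ofReal_mul (by positivity)]
    congr 1
    rw [Real.div_rpow (Real.exp_pos _).le hS.le, Real.div_rpow (Real.exp_pos _).le hS.le,
      div_mul_div_comm, ← Real.exp_mul, ← Real.exp_mul, ← Real.exp_add,
      ← Real.rpow_add hS]
    have hSpow : S ^ (α + (1 - α)) = S := by
      rw [show α + (1-α) = (1:ℝ) by ring, Real.rpow_one]
    have hcomb : Real.exp (α * (α - 1) * ((a:ℝ) - (a':ℝ)) ^ 2 / (2 * t)) / S *
          Real.exp (-((x:ℝ) - c) ^ 2 / (2 * t))
        = Real.exp (α * (α - 1) * ((a:ℝ) - (a':ℝ)) ^ 2 / (2 * t) +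
            -((x:ℝ) - c) ^ 2 / (2 * t)) / S := by
      rw [Real.exp_add]; ring
    rw [hSpow, hK, hcomb, div_eq_mul_inv, div_eq_mul_inv]
    congr 1
    rw [Real.exp_eq_exp]
    have hx : ((x - a : ℤ):ℝ) = (x:ℝ) - a := by push_cast; ring
    have hx' : ((x - a' : ℤ):ℝ) = (x:ℝ) - a' := by push_cast; ring
    rw [hx, hx', hc]
    field_simp
    ring
  rw [tsum_congr hterm]
  have hsummable : Summable fun x : ℤ => K / S * Real.exp (-((x:ℝ) - c) ^ 2 / (2*t)) :=
    (summable_shift ht c).mul_left _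
  rw [← ENNReal.ofReal_tsum_of_nonneg (fun x => by positivity) hsummable]
  rw [tsum_mul_left]
  refine ENNReal.ofReal_le_ofReal ?_
  calc K / S * ∑' x : ℤ, Real.exp (-((x:ℝ) - c) ^ 2 / (2*t))
      ≤ K / S * S := by
        refine mul_le_mul_of_nonneg_left ?_ (by positivity)
        exact key_shift' ht c
    _ = K := div_mul_cancel₀ K hS.ne'

lemma tsum_pi_prod : ∀ {n : ℕ} (F : Fin n → ℤ → ℝ≥0∞),
    ∑' w : Fin n → ℤ, ∏ i, F i (w i) = ∏ i, ∑' x, F i x := by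
  intro n
  induction n with
  | zero =>
    intro F
    rw [tsum_eq_single (fun i => (0:ℤ)) (fun b hb => absurd (Subsingleton.elim b _) hb)]
    simp
  | succ n ih =>
    intro F
    rw [← (Fin.consEquiv (fun _ : Fin (n+1) => ℤ)).tsum_eq, ENNReal.tsum_prod']
    have hterm : ∀ (x : ℤ) (w : Fin n → ℤ),
        (∏ i, F i ((Fin.consEquiv (fun _ : Fin (n+1) => ℤ)) (x, w) i))
          = F 0 x * ∏ i : Fin n, F i.succ (w i) := by
      intro x w
      rw [Fin.prod_univ_succ]
      simp [Fin.consEquiv]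
    simp_rw [hterm]
    rw [Fin.prod_univ_succ]
    simp_rw [ENNReal.tsum_mul_left, ENNReal.tsum_mul_right]
    rw [ih (fun i => F i.succ)]

end Helpers

open Real in
/-- The vector discrete Gaussian mechanism satisfies zCDP at the level of output
distributions: if `‖a - a'‖₂ ≤ Δ` then the product of `n` independent `N_ℤ(1/(2ρ))`
noises centered at `a` and `a'` respectively have Rényi divergence at most `Δ²ρα`. -/
theorem renyiDiv_vector_discreteGaussian
    (n : ℕ) (hn : 1 ≤ n) (ρ : ℝ) (hρ : 0 < ρ) (Δ : ℝ) (hΔ : 0 ≤ Δ)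
    (a a' : Fin n → ℤ)
    (hsens : Real.sqrt (∑ i : Fin n, ((a i - a' i : ℤ) : ℝ) ^ 2) ≤ Δ) :
    ∀ α : ℝ, 1 < α →
      renyiDiv α
        (fun w : Fin n → ℤ => ∏ i : Fin n, discreteGaussian (1 / (2 * ρ)) (w i - a i))
        (fun w : Fin n → ℤ => ∏ i : Fin n, discreteGaussian (1 / (2 * ρ)) (w i - a' i))
        ≤ ((Δ ^ 2 * ρ * α : ℝ) : EReal) := by
  intro α hα
  have ht : (0:ℝ) < 1 / (2 * ρ) := by positivity
  set t : ℝ := 1 / (2 * ρ) with htdef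
  have hα1 : (0:ℝ) < α - 1 := sub_pos.mpr hα
  -- rewrite the summand as a product over coordinates
  have hfin : ∀ (b : ℤ) (i : Fin n), ∀ _ : i ∈ Finset.univ,
      discreteGaussian t b ≠ ⊤ := by
    intro b i _
    rw [discreteGaussian]
    exact ENNReal.ofReal_ne_top
  have hterm : ∀ w : Fin n → ℤ,
      (∏ i, discreteGaussian t (w i - a i)) ^ α *
        (∏ i, discreteGaussian t (w i - a' i)) ^ (1 - α)
      = ∏ i, ((discreteGaussian t (w i - a i)) ^ α *
          (discreteGaussian t (w i - a' i)) ^ (1 - α)) := by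
    intro w
    rw [← ENNReal.prod_rpow_of_ne_top (fun i hi => hfin _ i hi) α,
      ← ENNReal.prod_rpow_of_ne_top (fun i hi => hfin _ i hi) (1 - α),
      ← Finset.prod_mul_distrib]
  have hfact :
      (∑' w : Fin n → ℤ, (∏ i, discreteGaussian t (w i - a i)) ^ α *
        (∏ i, discreteGaussian t (w i - a' i)) ^ (1 - α))
      = ∏ i : Fin n, ∑' x : ℤ, (discreteGaussian t (x - a i)) ^ α *
          (discreteGaussian t (x - a' i)) ^ (1 - α) := by
    rw [tsum_congr hterm]
    exact tsum_pi_prod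
      (fun i x => (discreteGaussian t (x - a i)) ^ α * (discreteGaussian t (x - a' i)) ^ (1 - α))
  -- bound the sum
  have hd2 : ∑ i : Fin n, ((a i : ℝ) - (a' i : ℝ)) ^ 2 ≤ Δ ^ 2 := by
    have hcast : ∑ i : Fin n, ((a i : ℝ) - (a' i : ℝ)) ^ 2
        = ∑ i : Fin n, ((a i - a' i : ℤ) : ℝ) ^ 2 := by
      refine Finset.sum_congr rfl fun i _ => ?_; push_cast; ring
    rw [hcast]
    have h0 : (0:ℝ) ≤ ∑ i : Fin n, ((a i - a' i : ℤ) : ℝ) ^ 2 := by positivity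
    calc ∑ i : Fin n, ((a i - a' i : ℤ) : ℝ) ^ 2
        = Real.sqrt (∑ i : Fin n, ((a i - a' i : ℤ) : ℝ) ^ 2) ^ 2 := (Real.sq_sqrt h0).symm
      _ ≤ Δ ^ 2 := pow_le_pow_left₀ (Real.sqrt_nonneg _) hsens 2
  have hsum_le :
      (∑' w : Fin n → ℤ, (∏ i, discreteGaussian t (w i - a i)) ^ α *
        (∏ i, discreteGaussian t (w i - a' i)) ^ (1 - α))
      ≤ ENNReal.ofReal (Real.exp (α * (α - 1) * ρ * Δ ^ 2)) := by
    rw [hfact]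
    calc (∏ i : Fin n, ∑' x : ℤ, (discreteGaussian t (x - a i)) ^ α *
            (discreteGaussian t (x - a' i)) ^ (1 - α))
        ≤ ∏ i : Fin n, ENNReal.ofReal
            (Real.exp (α * (α-1) * ((a i : ℝ) - (a' i : ℝ))^2 / (2*t))) :=
          Finset.prod_le_prod' fun i _ => coord ht hα (a i) (a' i)
      _ = ENNReal.ofReal (∏ i : Fin n,
            Real.exp (α * (α-1) * ((a i : ℝ) - (a' i : ℝ))^2 / (2*t))) :=
          (ENNReal.ofReal_prod_of_nonneg fun i _ => (Real.exp_pos _).le).symm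
      _ ≤ ENNReal.ofReal (Real.exp (α * (α - 1) * ρ * Δ ^ 2)) := by
          refine ENNReal.ofReal_le_ofReal ?_
          rw [← Real.exp_sum]
          refine Real.exp_le_exp.mpr ?_
          have h2t : ∀ x : ℝ, x / (2 * t) = x * ρ := by
            intro x; rw [htdef]; field_simp
          calc ∑ i : Fin n, α * (α-1) * ((a i : ℝ) - (a' i : ℝ))^2 / (2*t)
              = α * (α - 1) * ρ * ∑ i : Fin n, ((a i : ℝ) - (a' i : ℝ))^2 := by
                rw [Finset.mul_sum]
                refine Finset.sum_congr rfl fun i _ => ?_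
                rw [h2t]; ring
            _ ≤ α * (α - 1) * ρ * Δ ^ 2 := by
                refine mul_le_mul_of_nonneg_left hd2 ?_
                positivity
  -- conclude
  rw [renyiDiv]
  have hlog : ENNReal.log (∑' w : Fin n → ℤ, (∏ i, discreteGaussian t (w i - a i)) ^ α *
        (∏ i, discreteGaussian t (w i - a' i)) ^ (1 - α))
      ≤ ((α * (α - 1) * ρ * Δ ^ 2 : ℝ) : EReal) := by
    calc ENNReal.log _ ≤ ENNReal.log (ENNReal.ofReal (Real.exp (α * (α - 1) * ρ * Δ ^ 2))) :=
          ENNReal.log_monotone hsum_le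
      _ = ((α * (α - 1) * ρ * Δ ^ 2 : ℝ) : EReal) := by
          rw [ENNReal.log_ofReal_of_pos (Real.exp_pos _), Real.log_exp]
  calc (((α - 1)⁻¹ : ℝ) : EReal) * ENNReal.log (∑' w : Fin n → ℤ,
          (∏ i, discreteGaussian t (w i - a i)) ^ α *
          (∏ i, discreteGaussian t (w i - a' i)) ^ (1 - α))
      ≤ (((α - 1)⁻¹ : ℝ) : EReal) * ((α * (α - 1) * ρ * Δ ^ 2 : ℝ) : EReal) :=
        mul_le_mul_of_nonneg_left hlog
          (by exact_mod_cast inv_nonneg.mpr hα1.le)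
    _ = ((Δ ^ 2 * ρ * α : ℝ) : EReal) := by
        rw [← EReal.coe_mul]
        norm_cast
        field_simp
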